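/- Consider a partial PJR-Exact run of length r of an approval-based multi-winner election (distinct candidates w_1,…,w_r and fraction functions f^0,…,f^r satisfying the PJR-Exact conditions for iterations 1,…,r) whose r iterations are all normal, and suppose that either r = k, or r < k and every candidate c ∈ C \ W_r satisfies Σ_{i : c ∈ A_i} f^r_i < q. Then every committee W ⊆ C with W_r ⊆ W and |W| = k provides extended justified representation (EJR). In particular, all voting rules in the EJR-Exact family satisfy EJR. -/

import Mathlib

open Finset

variable {C : Type*} [Fintype C] [DecidableEq C]

/-- The voters approving candidate `c`. -/
def approvers {n : ℕ} (A : Fin n → Finset C) (c : C) : Finset (Fin n) :=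
  Finset.univ.filter (fun i => c ∈ A i)

/-- The exact quota `q = n / k`. -/
def quota (n k : ℕ) : ℚ := (n : ℚ) / (k : ℚ)

/-- Remaining support of candidate `c` under vote fractions `f`. -/
def supp {n : ℕ} (A : Fin n → Finset C) (f : Fin n → ℚ) (c : C) : ℚ :=
  ∑ i ∈ approvers A c, f i

/-- The set `W_j = {w_1, …, w_j}` of the first `j` winners. -/
def Wset (w : ℕ → C) (j : ℕ) : Finset C := (Finset.Icc 1 j).image w

/-- The candidates approved by every voter in `Ns`, i.e. `⋂_{i ∈ Ns} A i`. -/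
def commonApproved {n : ℕ} (A : Fin n → Finset C) (Ns : Finset (Fin n)) : Finset C :=
  Finset.univ.filter (fun c => ∀ i ∈ Ns, c ∈ A i)

/-- `Ns` is an `ℓ`-cohesive group of voters: `|Ns| ≥ ℓ·n/k` and `|⋂_{i ∈ Ns} A i| ≥ ℓ`. -/
def Cohesive {n : ℕ} (A : Fin n → Finset C) (k ℓ : ℕ) (Ns : Finset (Fin n)) : Prop :=
  (ℓ : ℚ) * (n : ℚ) / (k : ℚ) ≤ (Ns.card : ℚ) ∧ ℓ ≤ (commonApproved A Ns).card

/-- `W` provides proportional justified representation for `(A, k)`. -/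
def ProvidesPJR {n : ℕ} (A : Fin n → Finset C) (k : ℕ) (W : Finset C) : Prop :=
  ∀ ℓ : ℕ, 1 ≤ ℓ → ℓ ≤ k → ∀ Ns : Finset (Fin n), Cohesive A k ℓ Ns →
    ℓ ≤ (W ∩ Ns.biUnion A).card

/-- `W` provides extended justified representation for `(A, k)`. -/
def ProvidesEJR {n : ℕ} (A : Fin n → Finset C) (k : ℕ) (W : Finset C) : Prop :=
  ∀ ℓ : ℕ, 1 ≤ ℓ → ℓ ≤ k → ∀ Ns : Finset (Fin n), Cohesive A k ℓ Ns →
    ∃ i ∈ Ns, ℓ ≤ (A i ∩ W).card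

/-- The set of `ℓ`'s satisfying the dissatisfaction-level fixpoint equation
`ℓ = ⌊(k/n)·|{i : c ∈ A_i ∧ |A_i ∩ W| < ℓ}|⌋`
(natural-number division `k * m / n` is exactly the floor `⌊(k/n)·m⌋`). -/
def dissatSet {n : ℕ} (A : Fin n → Finset C) (k : ℕ) (W : Finset C) (c : C) : Set ℕ :=
  {ℓ : ℕ | ℓ = k * (Finset.univ.filter (fun i => c ∈ A i ∧ (A i ∩ W).card < ℓ)).card / n}

/-- The dissatisfaction level `ℓ(c, W)`: the largest non-negative integer satisfying
the fixpoint equation. -/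
noncomputable def dissat {n : ℕ} (A : Fin n → Finset C) (k : ℕ) (W : Finset C) (c : C) : ℕ :=
  sSup (dissatSet A k W c)

/-- `ℓ_W(i, c) = max_{c' ∈ A_i \ (W ∪ {c})} ℓ(c', W)` (with `max ∅ = 0`). -/
noncomputable def dissatVoter {n : ℕ} (A : Fin n → Finset C) (k : ℕ) (W : Finset C)
    (i : Fin n) (c : C) : ℕ :=
  (A i \ insert c W).sup (dissat A k W)

/-- `ℓ_W(i) = max_{c ∈ A_i \ W} ℓ(c, W)` (with `max ∅ = 0`). -/
noncomputable def dissatVoterAll {n : ℕ} (A : Fin n → Finset C) (k : ℕ) (W : Finset C)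
    (i : Fin n) : ℕ :=
  (A i \ W).sup (dissat A k W)

/-- `g_i(c)` relative to the committee `W`. -/
noncomputable def gfun {n : ℕ} (A : Fin n → Finset C) (k : ℕ) (W : Finset C)
    (i : Fin n) (c : C) : ℚ :=
  if dissatVoter A k W i c ≤ (A i ∩ W).card then 0
  else ((dissatVoter A k W i c : ℚ) - ((A i ∩ W).card : ℚ) - 1) / (dissatVoter A k W i c : ℚ)

/-- Candidate `c ∉ W` is in a normal state (w.r.t. committee `W` and fractions `f`). -/
def NormalState {n : ℕ} (A : Fin n → Finset C) (k : ℕ) (f : Fin n → ℚ) (W : Finset C)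
    (c : C) : Prop :=
  (∀ i : Fin n, c ∈ A i → (A i ∩ W).card < dissatVoter A k W i c →
      ((dissatVoter A k W i c : ℚ) - ((A i ∩ W).card : ℚ)) / (dissatVoter A k W i c : ℚ) ≤ f i) ∧
  quota n k ≤ ∑ i ∈ approvers A c, (f i - gfun A k W i c)

/-- Candidate `c ∉ W` is in a starving state. -/
def StarvingState {n : ℕ} (A : Fin n → Finset C) (k : ℕ) (f : Fin n → ℚ) (W : Finset C)
    (c : C) : Prop :=
  ∃ i : Fin n, c ∈ A i ∧ (A i ∩ W).card < dissatVoter A k W i c ∧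
    f i < ((dissatVoter A k W i c : ℚ) - ((A i ∩ W).card : ℚ)) / (dissatVoter A k W i c : ℚ)

/-- Candidate `c ∉ W` is in an eager state. -/
def EagerState {n : ℕ} (A : Fin n → Finset C) (k : ℕ) (f : Fin n → ℚ) (W : Finset C)
    (c : C) : Prop :=
  ¬ StarvingState A k f W c ∧ quota n k ≤ supp A f c ∧
    ∑ i ∈ approvers A c, (f i - gfun A k W i c) < quota n k

/-- A run of a voting rule in the PJR-Exact family: a sequence of distinct winners
`w 1, …, w k` together with fraction functions `f 0, …, f k` satisfying the three
defining conditions of the family. -/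
structure PJRExactRun (n k : ℕ) (A : Fin n → Finset C) where
  w : ℕ → C
  f : ℕ → Fin n → ℚ
  /-- the selected candidates are pairwise distinct -/
  w_inj : ∀ j j' : ℕ, 1 ≤ j → j ≤ k → 1 ≤ j' → j' ≤ k → w j = w j' → j = j'
  /-- initially each voter has her whole vote -/
  f_zero : ∀ i, f 0 i = 1
  /-- fractions stay non-negative -/
  f_nonneg : ∀ j, 1 ≤ j → j ≤ k → ∀ i, 0 ≤ f j i
  /-- fractions never increase -/
  f_mono : ∀ j, 1 ≤ j → j ≤ k → ∀ i, f j i ≤ f (j - 1) i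
  /-- if the remaining support of the winner exceeds the quota, exactly `q` votes are removed -/
  remove_big : ∀ j, 1 ≤ j → j ≤ k → quota n k < supp A (f (j - 1)) (w j) →
    ∑ i ∈ approvers A (w j), (f (j - 1) i - f j i) = quota n k
  /-- if the remaining support of the winner is at most the quota, all of it is removed -/
  remove_small : ∀ j, 1 ≤ j → j ≤ k → supp A (f (j - 1)) (w j) ≤ quota n k →
    ∀ i, w j ∈ A i → f j i = 0
  /-- voters not approving the winner keep their fractions -/
  f_untouched : ∀ j, 1 ≤ j → j ≤ k → ∀ i, w j ∉ A i → f j i = f (j - 1) i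
  /-- if some unelected candidate has remaining support at least `q`,
  then so has the selected one -/
  greedy : ∀ j, 1 ≤ j → j ≤ k →
    (∃ c, c ∉ Wset w (j - 1) ∧ quota n k ≤ supp A (f (j - 1)) c) →
    quota n k ≤ supp A (f (j - 1)) (w j)

/-- Iteration `j` of a PJR-Exact run is normal. -/
def NormalIteration {n k : ℕ} {A : Fin n → Finset C} (R : PJRExactRun n k A) (j : ℕ) : Prop :=
  NormalState A k (R.f (j - 1)) (Wset R.w (j - 1)) (R.w j) ∧
  ∀ i : Fin n, R.w j ∈ A i →
    (A i ∩ Wset R.w (j - 1)).card < dissatVoter A k (Wset R.w (j - 1)) i (R.w j) →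
    ((dissatVoter A k (Wset R.w (j - 1)) i (R.w j) : ℚ) - ((A i ∩ Wset R.w j).card : ℚ)) /
      (dissatVoter A k (Wset R.w (j - 1)) i (R.w j) : ℚ) ≤ R.f j i

/-- A partial PJR-Exact run of length `r`: distinct winners `w 1, …, w r` and fraction
functions `f 0, …, f r` satisfying the PJR-Exact conditions for iterations `1, …, r`. -/
structure PJRExactPartialRun (n k r : ℕ) (A : Fin n → Finset C) where
  w : ℕ → C
  f : ℕ → Fin n → ℚ
  w_inj : ∀ j j' : ℕ, 1 ≤ j → j ≤ r → 1 ≤ j' → j' ≤ r → w j = w j' → j = j'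
  f_zero : ∀ i, f 0 i = 1
  f_nonneg : ∀ j, 1 ≤ j → j ≤ r → ∀ i, 0 ≤ f j i
  f_mono : ∀ j, 1 ≤ j → j ≤ r → ∀ i, f j i ≤ f (j - 1) i
  remove_big : ∀ j, 1 ≤ j → j ≤ r → quota n k < supp A (f (j - 1)) (w j) →
    ∑ i ∈ approvers A (w j), (f (j - 1) i - f j i) = quota n k
  remove_small : ∀ j, 1 ≤ j → j ≤ r → supp A (f (j - 1)) (w j) ≤ quota n k →
    ∀ i, w j ∈ A i → f j i = 0
  f_untouched : ∀ j, 1 ≤ j → j ≤ r → ∀ i, w j ∉ A i → f j i = f (j - 1) i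
  greedy : ∀ j, 1 ≤ j → j ≤ r →
    (∃ c, c ∉ Wset w (j - 1) ∧ quota n k ≤ supp A (f (j - 1)) c) →
    quota n k ≤ supp A (f (j - 1)) (w j)

/-- Iteration `j` of a partial PJR-Exact run is normal. -/
def NormalIterationP {n k r : ℕ} {A : Fin n → Finset C} (R : PJRExactPartialRun n k r A)
    (j : ℕ) : Prop :=
  NormalState A k (R.f (j - 1)) (Wset R.w (j - 1)) (R.w j) ∧
  ∀ i : Fin n, R.w j ∈ A i →
    (A i ∩ Wset R.w (j - 1)).card < dissatVoter A k (Wset R.w (j - 1)) i (R.w j) →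
    ((dissatVoter A k (Wset R.w (j - 1)) i (R.w j) : ℚ) - ((A i ∩ Wset R.w j).card : ℚ)) /
      (dissatVoter A k (Wset R.w (j - 1)) i (R.w j) : ℚ) ≤ R.f j i

set_option linter.unusedSectionVars false
section AuxLemmas

variable {C : Type*} [Fintype C] [DecidableEq C]

lemma exists_fixpoint (h : ℕ → ℕ) (hmono : Monotone h) (k : ℕ) (hbdd : ∀ x, h x ≤ k)
    (ℓ0 : ℕ) (h0 : ℓ0 ≤ h ℓ0) : ∃ ℓ, ℓ0 ≤ ℓ ∧ h ℓ = ℓ := by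
  have low : ∀ t, ℓ0 ≤ h^[t] ℓ0 := by
    intro t
    induction t with
    | zero => simp
    | succ t ih =>
      rw [Function.iterate_succ_apply']
      exact le_trans h0 (hmono ih)
  have step : ∀ t, h^[t] ℓ0 ≤ h^[t+1] ℓ0 := by
    intro t
    induction t with
    | zero => simpa using h0
    | succ t ih =>
      rw [Function.iterate_succ_apply', Function.iterate_succ_apply']
      exact hmono ih
  have main : ∀ t, (∃ s, h (h^[s] ℓ0) = h^[s] ℓ0) ∨ t ≤ h^[t] ℓ0 := by
    intro t
    induction t with
    | zero => exact Or.inr (Nat.zero_le _)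
    | succ t ih =>
      rcases ih with h1 | h1
      · exact Or.inl h1
      · by_cases heq : h (h^[t] ℓ0) = h^[t] ℓ0
        · exact Or.inl ⟨t, heq⟩
        · right
          have hne : h^[t] ℓ0 ≠ h^[t+1] ℓ0 := by
            rw [Function.iterate_succ_apply']
            exact fun e => heq e.symm
          have h2 : h^[t] ℓ0 < h^[t+1] ℓ0 := lt_of_le_of_ne (step t) hne
          omega
  rcases main (k+1) with ⟨s, hs⟩ | h1
  · exact ⟨h^[s] ℓ0, low s, hs⟩
  · exfalso
    rw [Function.iterate_succ_apply'] at h1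
    have := hbdd (h^[k] ℓ0)
    omega

lemma dissatSet_zero {n : ℕ} (A : Fin n → Finset C) (k : ℕ) (W : Finset C) (c : C) :
    (0 : ℕ) ∈ dissatSet A k W c := by
  simp [dissatSet]

lemma dissatSet_bddAbove {n : ℕ} (hn : 0 < n) (A : Fin n → Finset C) (k : ℕ)
    (W : Finset C) (c : C) : BddAbove (dissatSet A k W c) := by
  refine ⟨k, fun ℓ hℓ => ?_⟩
  simp only [dissatSet, Set.mem_setOf_eq] at hℓ
  have h1 : (Finset.univ.filter (fun i => c ∈ A i ∧ (A i ∩ W).card < ℓ)).card ≤ n := by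
    calc _ ≤ (Finset.univ : Finset (Fin n)).card := Finset.card_le_card (Finset.filter_subset _ _)
    _ = n := by simp
  calc ℓ = k * (Finset.univ.filter (fun i => c ∈ A i ∧ (A i ∩ W).card < ℓ)).card / n := hℓ
  _ ≤ k * n / n := Nat.div_le_div_right (Nat.mul_le_mul_left _ h1)
  _ = k := Nat.mul_div_cancel _ hn

lemma le_dissat {n : ℕ} (hn : 0 < n) (A : Fin n → Finset C) (k : ℕ) (W : Finset C)
    (c : C) (ℓ : ℕ)
    (hl : ℓ * n ≤ k * (Finset.univ.filter (fun i => c ∈ A i ∧ (A i ∩ W).card < ℓ)).card) :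
    ℓ ≤ dissat A k W c := by
  set h : ℕ → ℕ := fun x =>
    k * (Finset.univ.filter (fun i => c ∈ A i ∧ (A i ∩ W).card < x)).card / n with hh
  have hmono : Monotone h := by
    intro x y hxy
    apply Nat.div_le_div_right
    apply Nat.mul_le_mul_left
    apply Finset.card_le_card
    apply Finset.monotone_filter_right
    exact fun i _ hi => ⟨hi.1, lt_of_lt_of_le hi.2 hxy⟩
  have hbdd : ∀ x, h x ≤ k := by
    intro x
    have h1 : (Finset.univ.filter (fun i => c ∈ A i ∧ (A i ∩ W).card < x)).card ≤ n := by
      calc _ ≤ (Finset.univ : Finset (Fin n)).card := Finset.card_le_card (Finset.filter_subset _ _)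
      _ = n := by simp
    calc h x ≤ k * n / n := Nat.div_le_div_right (Nat.mul_le_mul_left _ h1)
    _ = k := Nat.mul_div_cancel _ hn
  have h0 : ℓ ≤ h ℓ := (Nat.le_div_iff_mul_le hn).mpr hl
  obtain ⟨ℓ', hℓℓ', hfix⟩ := exists_fixpoint h hmono k hbdd ℓ h0
  refine le_trans hℓℓ' (le_csSup (dissatSet_bddAbove hn A k W c) ?_)
  simp only [dissatSet, Set.mem_setOf_eq]
  exact hfix.symm

lemma dissat_anti {n : ℕ} (hn : 0 < n) (A : Fin n → Finset C) (k : ℕ) {W W' : Finset C}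
    (hWW : W ⊆ W') (c : C) : dissat A k W' c ≤ dissat A k W c := by
  set L := dissat A k W' c with hL
  have hmem : L ∈ dissatSet A k W' c :=
    Nat.sSup_mem ⟨0, dissatSet_zero A k W' c⟩ (dissatSet_bddAbove hn A k W' c)
  simp only [dissatSet, Set.mem_setOf_eq] at hmem
  apply le_dissat hn
  have h1 : (Finset.univ.filter (fun i => c ∈ A i ∧ (A i ∩ W').card < L)).card ≤
      (Finset.univ.filter (fun i => c ∈ A i ∧ (A i ∩ W).card < L)).card := by
    apply Finset.card_le_card
    apply Finset.monotone_filter_right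
    intro i _ hi
    exact ⟨hi.1, lt_of_le_of_lt (Finset.card_le_card (Finset.inter_subset_inter (Finset.Subset.refl _) hWW)) hi.2⟩
  calc L * n = k * (Finset.univ.filter (fun i => c ∈ A i ∧ (A i ∩ W').card < L)).card / n * n := by
        rw [← hmem]
  _ ≤ k * (Finset.univ.filter (fun i => c ∈ A i ∧ (A i ∩ W').card < L)).card :=
        Nat.div_mul_le_self _ _
  _ ≤ _ := Nat.mul_le_mul_left _ h1

lemma Wset_zero (w : ℕ → C) : Wset w 0 = ∅ := by simp [Wset]

lemma Wset_succ (w : ℕ → C) (j : ℕ) : Wset w (j+1) = insert (w (j+1)) (Wset w j) := by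
  unfold Wset
  rw [show Finset.Icc 1 (j+1) = insert (j+1) (Finset.Icc 1 j) by
    ext x; simp [Finset.mem_Icc]; omega]
  rw [Finset.image_insert]

lemma Wset_mono (w : ℕ → C) : Monotone (Wset w) := fun _ _ h =>
  Finset.image_subset_image (Finset.Icc_subset_Icc_right h)

lemma dissatVoterAll_anti {n : ℕ} (hn : 0 < n) (A : Fin n → Finset C) (k : ℕ)
    {W W' : Finset C} (hWW : W ⊆ W') (i : Fin n) :
    dissatVoterAll A k W' i ≤ dissatVoterAll A k W i :=
  Finset.sup_le fun c hc =>
    le_trans (dissat_anti hn A k hWW c)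
      (Finset.le_sup (Finset.sdiff_subset_sdiff (Finset.Subset.refl _) hWW hc))

lemma dissatVoterAll_succ_le {n : ℕ} (hn : 0 < n) (A : Fin n → Finset C) (k : ℕ)
    (w : ℕ → C) (j : ℕ) (i : Fin n) :
    dissatVoterAll A k (Wset w (j+1)) i ≤ dissatVoter A k (Wset w j) i (w (j+1)) := by
  unfold dissatVoterAll dissatVoter
  rw [Wset_succ]
  exact Finset.sup_mono_fun fun c _ => dissat_anti hn A k (Finset.subset_insert _ _) c

lemma frac_mono {a x y : ℚ} (ha : 0 ≤ a) (hx : 0 < x) (hxy : x ≤ y) :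
    (x - a)/x ≤ (y - a)/y := by
  rw [sub_div, sub_div, div_self hx.ne', div_self (hx.trans_le hxy).ne']
  exact sub_le_sub_left (div_le_div_of_nonneg_left ha hx hxy) 1

end AuxLemmas

lemma pjr_invariant {C : Type*} [Fintype C] [DecidableEq C] {n k r : ℕ} (hn : 0 < n)
    {A : Fin n → Finset C} (R : PJRExactPartialRun n k r A)
    (hnormal : ∀ j : ℕ, 1 ≤ j → j ≤ r → NormalIterationP R j) :
    ∀ j, j ≤ r → ∀ i, (A i ∩ Wset R.w j).card < dissatVoterAll A k (Wset R.w j) i →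
      ((dissatVoterAll A k (Wset R.w j) i : ℚ) - ((A i ∩ Wset R.w j).card : ℚ)) /
        (dissatVoterAll A k (Wset R.w j) i : ℚ) ≤ R.f j i := by
  intro j
  induction j with
  | zero =>
    intro _ i hlt
    rw [R.f_zero]
    rw [Wset_zero] at hlt ⊢
    simp only [Finset.inter_empty, Finset.card_empty, Nat.cast_zero, sub_zero] at hlt ⊢
    have hpos : (0:ℚ) < (dissatVoterAll A k (∅ : Finset C) i : ℚ) := by exact_mod_cast hlt
    rw [div_self hpos.ne']
  | succ j ih =>
    intro hj i hlt
    have hj' : j ≤ r := Nat.le_of_succ_le hj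
    have hj1 : 1 ≤ j + 1 := by omega
    by_cases hw : R.w (j+1) ∈ A i
    · have hN := (hnormal (j+1) hj1 hj).2 i hw
      simp only [Nat.add_sub_cancel] at hN
      have hle : dissatVoterAll A k (Wset R.w (j+1)) i ≤
          dissatVoter A k (Wset R.w j) i (R.w (j+1)) :=
        dissatVoterAll_succ_le hn A k R.w j i
      have haa : (A i ∩ Wset R.w j).card ≤ (A i ∩ Wset R.w (j+1)).card :=
        Finset.card_le_card (Finset.inter_subset_inter (Finset.Subset.refl _) (Wset_mono R.w (Nat.le_succ j)))
      have ha : (A i ∩ Wset R.w j).card < dissatVoter A k (Wset R.w j) i (R.w (j+1)) :=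
        lt_of_le_of_lt haa (lt_of_lt_of_le hlt hle)
      refine le_trans ?_ (hN ha)
      apply frac_mono (Nat.cast_nonneg _)
      · exact_mod_cast Nat.pos_of_ne_zero (by omega)
      · exact_mod_cast hle
    · have hf : R.f (j+1) i = R.f j i := by
        have := R.f_untouched (j+1) hj1 hj i hw
        simpa using this
      have hint : A i ∩ Wset R.w (j+1) = A i ∩ Wset R.w j := by
        rw [Wset_succ]
        exact Finset.inter_insert_of_notMem hw
      have hLle : dissatVoterAll A k (Wset R.w (j+1)) i ≤ dissatVoterAll A k (Wset R.w j) i :=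
        dissatVoterAll_anti hn A k (Wset_mono R.w (Nat.le_succ j)) i
      rw [hint] at hlt ⊢
      rw [hf]
      have hlt2 : (A i ∩ Wset R.w j).card < dissatVoterAll A k (Wset R.w j) i :=
        lt_of_lt_of_le hlt hLle
      refine le_trans ?_ (ih hj' i hlt2)
      apply frac_mono (Nat.cast_nonneg _)
      · exact_mod_cast Nat.pos_of_ne_zero (by omega)
      · exact_mod_cast hLle

/-- if a partial PJR-Exact run of length `r` consists only of normal
iterations and either `r = k` or every remaining candidate is insufficiently supported,
then every size-`k` committee extending `W_r` provides EJR. In particular all voting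
rules in the EJR-Exact family satisfy EJR. -/
theorem ejrExact_satisfies_EJR {C : Type*} [Fintype C] [DecidableEq C] {n k r : ℕ}
    (hn : 0 < n) (hk : 1 ≤ k) (hkC : k ≤ Fintype.card C) (hr : r ≤ k)
    (A : Fin n → Finset C) (R : PJRExactPartialRun n k r A)
    (hnormal : ∀ j : ℕ, 1 ≤ j → j ≤ r → NormalIterationP R j)
    (hstop : r = k ∨ (r < k ∧ ∀ c : C, c ∉ Wset R.w r → supp A (R.f r) c < quota n k))
    (W : Finset C) (hWr : Wset R.w r ⊆ W) (hWcard : W.card = k) :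
    ProvidesEJR A k W := by
  intro ℓ hl1 hlk Ns hcoh
  by_contra hcon
  push_neg at hcon
  obtain ⟨hcard, hcomm⟩ := hcoh
  have hk0 : (0:ℚ) < k := by exact_mod_cast hk
  have hn0 : (0:ℚ) < n := by exact_mod_cast hn
  have hl0 : (0:ℚ) < ℓ := by exact_mod_cast hl1
  have hNspos : 0 < Ns.card := by
    rcases Nat.eq_zero_or_pos Ns.card with h | h
    · exfalso
      rw [h] at hcard
      push_cast at hcard
      have hp : (0:ℚ) < ↑ℓ * ↑n / ↑k := by positivity
      linarith
    · exact h
  obtain ⟨i0, hi0⟩ := Finset.card_pos.mp hNspos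
  have hex : ∃ c, c ∈ commonApproved A Ns ∧ c ∉ W := by
    by_contra h
    push_neg at h
    have hsub : commonApproved A Ns ⊆ A i0 ∩ W := fun c hc =>
      Finset.mem_inter.mpr ⟨(Finset.mem_filter.mp hc).2 i0 hi0, h c hc⟩
    exact absurd (le_trans hcomm (Finset.card_le_card hsub)) (not_le.mpr (hcon i0 hi0))
  obtain ⟨c, hcA, hcW⟩ := hex
  have hcAi : ∀ i ∈ Ns, c ∈ A i := fun i hi => (Finset.mem_filter.mp hcA).2 i hi
  -- key per-voter lower bound
  have key : ∀ j, j ≤ r → ∀ i ∈ Ns, 1/(ℓ:ℚ) ≤ R.f j i := by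
    intro j hj i hi
    have hWsub : Wset R.w j ⊆ W := le_trans (Wset_mono R.w hj) hWr
    have haW : (A i ∩ Wset R.w j).card < ℓ :=
      lt_of_le_of_lt (Finset.card_le_card (Finset.inter_subset_inter (Finset.Subset.refl _) hWsub)) (hcon i hi)
    have hNsub : Ns ⊆ Finset.univ.filter (fun i' => c ∈ A i' ∧ (A i' ∩ Wset R.w j).card < ℓ) := by
      intro i' hi'
      simp only [Finset.mem_filter, Finset.mem_univ, true_and]
      exact ⟨hcAi i' hi',
        lt_of_le_of_lt (Finset.card_le_card (Finset.inter_subset_inter (Finset.Subset.refl _) hWsub)) (hcon i' hi')⟩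
    have hcount : ℓ * n ≤
        k * (Finset.univ.filter (fun i' => c ∈ A i' ∧ (A i' ∩ Wset R.w j).card < ℓ)).card := by
      have h1 : ℓ * n ≤ Ns.card * k := by
        have := (div_le_iff₀ hk0).mp hcard
        exact_mod_cast this
      have h2 : Ns.card ≤
          (Finset.univ.filter (fun i' => c ∈ A i' ∧ (A i' ∩ Wset R.w j).card < ℓ)).card :=
        Finset.card_le_card hNsub
      calc ℓ * n ≤ Ns.card * k := h1
      _ ≤ _ * k := Nat.mul_le_mul_right _ h2
      _ = _ := Nat.mul_comm _ _
    have hdis : ℓ ≤ dissat A k (Wset R.w j) c := le_dissat hn A k _ c ℓ hcount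
    have hcmem : c ∈ A i \ Wset R.w j :=
      Finset.mem_sdiff.mpr ⟨hcAi i hi, fun h => hcW (hWsub h)⟩
    have hL : ℓ ≤ dissatVoterAll A k (Wset R.w j) i :=
      le_trans hdis (Finset.le_sup hcmem)
    have haL : (A i ∩ Wset R.w j).card < dissatVoterAll A k (Wset R.w j) i :=
      lt_of_lt_of_le haW hL
    have hinv := pjr_invariant hn R hnormal j hj i haL
    have h3 : ((ℓ:ℚ) - ((A i ∩ Wset R.w j).card : ℚ))/(ℓ:ℚ) ≤
        ((dissatVoterAll A k (Wset R.w j) i : ℚ) - ((A i ∩ Wset R.w j).card : ℚ)) /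
          (dissatVoterAll A k (Wset R.w j) i : ℚ) :=
      frac_mono (Nat.cast_nonneg _) hl0 (by exact_mod_cast hL)
    have h4 : 1/(ℓ:ℚ) ≤ ((ℓ:ℚ) - ((A i ∩ Wset R.w j).card : ℚ))/(ℓ:ℚ) := by
      have hc1 : ((A i ∩ Wset R.w j).card : ℚ) + 1 ≤ (ℓ:ℚ) := by exact_mod_cast haW
      gcongr
      linarith
    linarith
  have fnn : ∀ j, j ≤ r → ∀ i, 0 ≤ R.f j i := by
    intro j hj i
    cases j with
    | zero => rw [R.f_zero]; norm_num
    | succ j => exact R.f_nonneg (j+1) (by omega) hj i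
  have hNssub : Ns ⊆ approvers A c := by
    intro i hi
    simp only [approvers, Finset.mem_filter, Finset.mem_univ, true_and]
    exact hcAi i hi
  have hq0 : (0:ℚ) < quota n k := by
    unfold quota; positivity
  have suppb : ∀ j, j ≤ r → quota n k ≤ supp A (R.f j) c := by
    intro j hj
    have h1 : ∑ i ∈ Ns, R.f j i ≤ supp A (R.f j) c :=
      Finset.sum_le_sum_of_subset_of_nonneg hNssub (fun i _ _ => fnn j hj i)
    have h2 : ∑ i ∈ Ns, (1/(ℓ:ℚ)) ≤ ∑ i ∈ Ns, R.f j i :=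
      Finset.sum_le_sum (fun i hi => key j hj i hi)
    have h3 : quota n k ≤ ∑ i ∈ Ns, (1/(ℓ:ℚ)) := by
      rw [Finset.sum_const, nsmul_eq_mul, mul_one_div]
      unfold quota
      rw [div_le_div_iff₀ hk0 hl0]
      have hcard' : (ℓ:ℚ) * n ≤ Ns.card * k := (div_le_iff₀ hk0).mp hcard
      linear_combination hcard'
    linarith
  rcases hstop with hrk | ⟨hrlt, hsmall⟩
  · -- r = k : total mass contradiction
    have totals : ∀ j, j ≤ r → ∑ i, R.f j i = (n:ℚ) - (j:ℚ) * quota n k := by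
      intro j
      induction j with
      | zero =>
        intro _
        simp [R.f_zero]
      | succ j ih =>
        intro hj
        have hj' : j ≤ r := Nat.le_of_succ_le hj
        have hcnot : c ∉ Wset R.w j := fun h => hcW (le_trans (Wset_mono R.w hj') hWr h)
        have hsup : quota n k ≤ supp A (R.f j) (R.w (j+1)) := by
          have := R.greedy (j+1) (by omega) hj ⟨c, by simpa using hcnot, by simpa using suppb j hj'⟩
          simpa using this
        have hrem : ∑ i ∈ approvers A (R.w (j+1)), (R.f j i - R.f (j+1) i) = quota n k := by
          rcases lt_or_eq_of_le hsup with h | h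
          · have := R.remove_big (j+1) (by omega) hj
            simp only [Nat.add_sub_cancel] at this
            exact this h
          · have hz := R.remove_small (j+1) (by omega) hj (le_of_eq h.symm)
            rw [Finset.sum_sub_distrib]
            have hzz : ∑ i ∈ approvers A (R.w (j+1)), R.f (j+1) i = 0 :=
              Finset.sum_eq_zero fun i hi => hz i (by
                simpa [approvers] using hi)
            rw [hzz, sub_zero]
            exact h.symm
        have huntouched : ∀ i ∈ Finset.univ \ approvers A (R.w (j+1)),
            R.f (j+1) i = R.f j i := by
          intro i hi
          have hni : R.w (j+1) ∉ A i := by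
            simp only [Finset.mem_sdiff, Finset.mem_univ, true_and, approvers,
              Finset.mem_filter] at hi
            tauto
          have := R.f_untouched (j+1) (by omega) hj i hni
          simpa using this
        have hsplit : ∀ g : Fin n → ℚ, ∑ i, g i =
            ∑ i ∈ Finset.univ \ approvers A (R.w (j+1)), g i +
            ∑ i ∈ approvers A (R.w (j+1)), g i := fun g =>
          (Finset.sum_sdiff (Finset.subset_univ _)).symm
        have hstep : ∑ i, R.f (j+1) i = ∑ i, R.f j i - quota n k := by
          rw [hsplit (R.f (j+1)), hsplit (R.f j)]
          have e1 : ∑ i ∈ Finset.univ \ approvers A (R.w (j+1)), R.f (j+1) i =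
              ∑ i ∈ Finset.univ \ approvers A (R.w (j+1)), R.f j i :=
            Finset.sum_congr rfl huntouched
          have e2 : ∑ i ∈ approvers A (R.w (j+1)), R.f (j+1) i =
              ∑ i ∈ approvers A (R.w (j+1)), R.f j i - quota n k := by
            rw [Finset.sum_sub_distrib] at hrem
            linarith
          rw [e1, e2]
          ring
        rw [hstep, ih hj']
        push_cast
        ring
    have h0 : ∑ i, R.f r i = 0 := by
      rw [totals r le_rfl, hrk]
      unfold quota
      field_simp
      ring
    have hpos : quota n k ≤ ∑ i, R.f r i := by
      refine le_trans (suppb r le_rfl) ?_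
      exact Finset.sum_le_sum_of_subset_of_nonneg (Finset.subset_univ _)
        (fun i _ _ => fnn r le_rfl i)
    rw [h0] at hpos
    exact absurd hpos (not_le.mpr hq0)
  · exact absurd (suppb r le_rfl)
      (not_le.mpr (hsmall c (fun h => hcW (hWr h))))
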